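/- Let K : ℝ → ℝ be continuous with K t ≤ -M for all t, where M > 0, and let f : ℝ → ℝ satisfy f'' + K·f = 0 with f 0 = 0, f' 0 = -1. Then f is strictly decreasing, negative on (0,∞), and unbounded below as t → ∞ (i.e. f(t) → -∞). -/

import Mathlib

theorem jacobi_unbounded (K f : ℝ → ℝ) (M : ℝ) (hM : 0 < M)
    (hK : Continuous K) (hKle : ∀ t, K t ≤ -M)
    (hf : ContDiff ℝ 2 f)
    (hode : ∀ t, deriv (deriv f) t + K t * f t = 0)
    (h0 : f 0 = 0) (h0' : deriv f 0 = -1) :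
    StrictAnti f ∧ (∀ t > 0, f t < 0) ∧
      Filter.Tendsto f Filter.atTop Filter.atBot := by
  have hdf : Differentiable ℝ f := hf.differentiable (by norm_num)
  have hcd1 : ContDiff ℝ 1 (deriv f) := by
    have h := (contDiff_succ_iff_deriv (n := 1)).mp (by exact_mod_cast hf)
    exact h.2.2
  have hdf' : Differentiable ℝ (deriv f) := hcd1.differentiable (by norm_num)
  have hcf' : Continuous (deriv f) := hcd1.continuous
  have hdd : ∀ t, deriv (deriv f) t = -(K t * f t) := fun t => by linarith [hode t]
  -- initial interval where deriv f < 0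
  obtain ⟨δ, hδpos, hδ⟩ : ∃ δ > 0, ∀ s ∈ Set.Ioo (-δ) δ, deriv f s < 0 := by
    have hopen : IsOpen {s : ℝ | deriv f s < 0} := isOpen_lt hcf' continuous_const
    obtain ⟨δ, hδpos, hball⟩ := Metric.isOpen_iff.mp hopen 0 (by simp [h0'])
    refine ⟨δ, hδpos, fun s hs => hball ?_⟩
    rw [Real.ball_eq_Ioo]
    simpa using hs
  -- f < 0 on (0, δ) and f > 0 on (-δ, 0)
  have hsmallpos : ∀ s, 0 < s → s < δ → f s < 0 := by
    intro s hs0 hsδ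
    have hanti : StrictAntiOn f (Set.Icc 0 s) := by
      apply strictAntiOn_of_deriv_neg (convex_Icc 0 s) hdf.continuous.continuousOn
      intro x hx
      rw [interior_Icc] at hx
      exact hδ x ⟨by linarith [hx.1, hδpos], by linarith [hx.2]⟩
    have := hanti (Set.left_mem_Icc.2 hs0.le) (Set.right_mem_Icc.2 hs0.le) hs0
    rwa [h0] at this
  have hsmallneg : ∀ s, -δ < s → s < 0 → 0 < f s := by
    intro s hsδ hs0
    have hanti : StrictAntiOn f (Set.Icc s 0) := by
      apply strictAntiOn_of_deriv_neg (convex_Icc s 0) hdf.continuous.continuousOn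
      intro x hx
      rw [interior_Icc] at hx
      exact hδ x ⟨by linarith [hx.1], by linarith [hx.2, hδpos]⟩
    have := hanti (Set.left_mem_Icc.2 hs0.le) (Set.right_mem_Icc.2 hs0.le) hs0
    rwa [h0] at this
  -- f < 0 on (0, ∞)
  have hfneg : ∀ t > 0, f t < 0 := by
    by_contra hcon
    push_neg at hcon
    obtain ⟨t₀, ht₀, hft₀⟩ := hcon
    set S : Set ℝ := {t | 0 < t ∧ 0 ≤ f t} with hS
    have hne : S.Nonempty := ⟨t₀, ht₀, hft₀⟩
    have hbdd : BddBelow S := by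
      refine ⟨0, fun s hs => ?_⟩
      simp only [hS, Set.mem_setOf_eq] at hs
      exact hs.1.le
    set T := sInf S with hT
    have hTδ : δ ≤ T := by
      apply le_csInf hne
      intro s hs
      by_contra h
      push_neg at h
      exact absurd hs.2 (not_le.2 (hsmallpos s hs.1 h))
    have hTmem : 0 ≤ T ∧ 0 ≤ f T := by
      have hclosed : IsClosed {t : ℝ | 0 ≤ t ∧ 0 ≤ f t} :=
        (isClosed_le continuous_const continuous_id).inter
          (isClosed_le continuous_const hdf.continuous)
      have hsub : S ⊆ {t : ℝ | 0 ≤ t ∧ 0 ≤ f t} := by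
        intro s hs
        simp only [hS, Set.mem_setOf_eq] at hs ⊢
        exact ⟨hs.1.le, hs.2⟩
      exact closure_minimal hsub hclosed (csInf_mem_closure hne hbdd)
    have hbefore : ∀ s, 0 < s → s < T → f s < 0 := by
      intro s hs0 hsT
      by_contra h
      push_neg at h
      exact absurd (csInf_le hbdd ⟨hs0, h⟩) (not_le.2 hsT)
    -- deriv f antitone on [0, T]
    have hanti : AntitoneOn (deriv f) (Set.Icc 0 T) := by
      apply antitoneOn_of_deriv_nonpos (convex_Icc 0 T) hcf'.continuousOn
        (hdf'.differentiableOn)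
      intro x hx
      rw [interior_Icc] at hx
      rw [hdd x]
      have h1 : f x < 0 := hbefore x hx.1 hx.2
      have h2 : K x ≤ -M := hKle x
      nlinarith
    have hd1 : ∀ s ∈ Set.Icc (0:ℝ) T, deriv f s ≤ -1 := by
      intro s hs
      have := hanti (Set.left_mem_Icc.2 (by linarith [hδpos])) hs hs.1
      rwa [h0'] at this
    -- g = f + id antitone on [0,T]
    have hganti : AntitoneOn (fun t => f t + t) (Set.Icc 0 T) := by
      apply antitoneOn_of_deriv_nonpos (convex_Icc 0 T)
      · exact (hdf.continuous.add continuous_id).continuousOn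
      · exact (hdf.add differentiable_id).differentiableOn
      · intro x hx
        rw [interior_Icc] at hx
        rw [deriv_fun_add (hdf x) differentiableAt_fun_id]
        have := hd1 x ⟨hx.1.le, hx.2.le⟩
        simp only [deriv_id'']
        linarith
    have hT0 : (0:ℝ) ≤ T := by linarith [hδpos]
    have := hganti (Set.left_mem_Icc.2 hT0) (Set.right_mem_Icc.2 hT0) hT0
    simp only [h0, add_zero] at this
    linarith [hTmem.2, hδpos]
  -- f > 0 on (-∞, 0)
  have hfpos : ∀ t < 0, 0 < f t := by
    by_contra hcon
    push_neg at hcon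
    obtain ⟨t₀, ht₀, hft₀⟩ := hcon
    set S : Set ℝ := {t | t < 0 ∧ f t ≤ 0} with hS
    have hne : S.Nonempty := ⟨t₀, ht₀, hft₀⟩
    have hbdd : BddAbove S := by
      refine ⟨0, fun s hs => ?_⟩
      simp only [hS, Set.mem_setOf_eq] at hs
      exact hs.1.le
    set T := sSup S with hT
    have hTδ : T ≤ -δ := by
      apply csSup_le hne
      intro s hs
      simp only [hS, Set.mem_setOf_eq] at hs
      by_contra h
      push_neg at h
      have := hsmallneg s h hs.1
      linarith [hs.2]
    have hTmem : T ≤ 0 ∧ f T ≤ 0 := by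
      have hclosed : IsClosed {t : ℝ | t ≤ 0 ∧ f t ≤ 0} :=
        (isClosed_le continuous_id continuous_const).inter
          (isClosed_le hdf.continuous continuous_const)
      have hsub : S ⊆ {t : ℝ | t ≤ 0 ∧ f t ≤ 0} := by
        intro s hs
        simp only [hS, Set.mem_setOf_eq] at hs ⊢
        exact ⟨hs.1.le, hs.2⟩
      exact closure_minimal hsub hclosed (csSup_mem_closure hne hbdd)
    have hafter : ∀ s, T < s → s < 0 → 0 < f s := by
      intro s hTs hs0
      by_contra h
      push_neg at h
      exact absurd (le_csSup hbdd ⟨hs0, h⟩) (not_le.2 hTs)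
    -- deriv f monotone on [T, 0]
    have hmono : MonotoneOn (deriv f) (Set.Icc T 0) := by
      apply monotoneOn_of_deriv_nonneg (convex_Icc T 0) hcf'.continuousOn
        (hdf'.differentiableOn)
      intro x hx
      rw [interior_Icc] at hx
      rw [hdd x]
      have h1 : 0 < f x := hafter x hx.1 hx.2
      have h2 : K x ≤ -M := hKle x
      nlinarith
    have hd1 : ∀ s ∈ Set.Icc T (0:ℝ), deriv f s ≤ -1 := by
      intro s hs
      have := hmono hs (Set.right_mem_Icc.2 (by linarith [hδpos])) hs.2
      rwa [h0'] at this
    have hganti : AntitoneOn (fun t => f t + t) (Set.Icc T 0) := by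
      apply antitoneOn_of_deriv_nonpos (convex_Icc T 0)
      · exact (hdf.continuous.add continuous_id).continuousOn
      · exact (hdf.add differentiable_id).differentiableOn
      · intro x hx
        rw [interior_Icc] at hx
        rw [deriv_fun_add (hdf x) differentiableAt_fun_id]
        have := hd1 x ⟨hx.1.le, hx.2.le⟩
        simp only [deriv_id'']
        linarith
    have hT0 : T ≤ (0:ℝ) := by linarith [hδpos]
    have := hganti (Set.left_mem_Icc.2 hT0) (Set.right_mem_Icc.2 hT0) hT0
    simp only [h0, add_zero] at this
    linarith [hTmem.2, hδpos]
  -- deriv f ≤ -1 everywhere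
  have hder : ∀ t, deriv f t ≤ -1 := by
    intro t
    rcases le_or_gt t 0 with ht | ht
    · rcases eq_or_lt_of_le ht with rfl | ht'
      · rw [h0']
      · have hmono : MonotoneOn (deriv f) (Set.Icc t 0) := by
          apply monotoneOn_of_deriv_nonneg (convex_Icc t 0) hcf'.continuousOn
            (hdf'.differentiableOn)
          intro x hx
          rw [interior_Icc] at hx
          rw [hdd x]
          have h1 : 0 < f x := hfpos x hx.2
          have h2 : K x ≤ -M := hKle x
          nlinarith
        have := hmono (Set.left_mem_Icc.2 ht) (Set.right_mem_Icc.2 ht) ht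
        rwa [h0'] at this
    · have hanti : AntitoneOn (deriv f) (Set.Icc 0 t) := by
        apply antitoneOn_of_deriv_nonpos (convex_Icc 0 t) hcf'.continuousOn
          (hdf'.differentiableOn)
        intro x hx
        rw [interior_Icc] at hx
        rw [hdd x]
        have h1 : f x < 0 := hfneg x hx.1
        have h2 : K x ≤ -M := hKle x
        nlinarith
      have := hanti (Set.left_mem_Icc.2 ht.le) (Set.right_mem_Icc.2 ht.le) ht.le
      rwa [h0'] at this
  have hsa : StrictAnti f := strictAnti_of_deriv_neg fun t => by linarith [hder t]
  refine ⟨hsa, hfneg, ?_⟩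
  -- f t ≤ -t for t ≥ 0
  have hle : ∀ t ≥ (0:ℝ), f t ≤ -t := by
    intro t ht
    have hganti : AntitoneOn (fun s => f s + s) (Set.Icc 0 t) := by
      apply antitoneOn_of_deriv_nonpos (convex_Icc 0 t)
      · exact (hdf.continuous.add continuous_id).continuousOn
      · exact (hdf.add differentiable_id).differentiableOn
      · intro x hx
        rw [deriv_fun_add (hdf x) differentiableAt_fun_id]
        simp only [deriv_id'']
        linarith [hder x]
    have := hganti (Set.left_mem_Icc.2 ht) (Set.right_mem_Icc.2 ht) ht
    simp only [h0, add_zero] at this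
    linarith
  apply Filter.tendsto_atBot_mono' _ _ Filter.tendsto_neg_atTop_atBot
  filter_upwards [Filter.eventually_ge_atTop (0:ℝ)] with t ht
  exact hle t ht
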